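/- Let E = EuclideanSpace ℝ (Fin n) and let a, a', b, b' ∈ E with a ≠ a' and b ≠ b'. Then the following are equivalent: (1) there exist f, g : ℝ → E, continuous on [0,1], with f 0 = a, g 0 = a', f 1 = b, g 1 = b', f t ≠ g t for all t ∈ [0,1], and such that the path t ↦ ((f t, g t) : WithLp 2 (E × E)) has eVariationOn over Set.Icc 0 1 equal to ENNReal.ofReal (dist ((a,a') : WithLp 2 (E × E)) ((b,b') : WithLp 2 (E × E))); (2) there is no λ < 0 with b − b' = λ•(a − a'). -/

import Mathlib

private lemma seg_eVariation {X : Type*} [NormedAddCommGroup X] [NormedSpace ℝ X]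
    (P Q : X) :
    eVariationOn (fun t : ℝ => P + t • (Q - P)) (Set.Icc 0 1) =
      ENNReal.ofReal (dist P Q) := by
  set v := Q - P with hv
  apply le_antisymm
  · have hL : LipschitzWith ‖v‖₊ (fun x : ℝ => P + x • v) := by
      apply LipschitzWith.of_dist_le_mul
      intro x y
      rw [dist_eq_norm, dist_eq_norm]
      simp only [add_sub_add_left_eq_sub, ← sub_smul, norm_smul, Real.norm_eq_abs]
      rw [mul_comm, coe_nnnorm]
    have h1 : eVariationOn (fun t : ℝ => P + t • v) (Set.Icc 0 1)
        ≤ ‖v‖₊ * eVariationOn id (Set.Icc (0:ℝ) 1) :=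
      hL.lipschitzOnWith.comp_eVariationOn_le (Set.mapsTo_univ _ _)
    have h2 : eVariationOn id (Set.Icc (0:ℝ) 1) ≤ ENNReal.ofReal 1 := by
      have := monotoneOn_id.eVariationOn_le (s := Set.Icc (0:ℝ) 1)
        (Set.left_mem_Icc.2 zero_le_one) (Set.right_mem_Icc.2 zero_le_one)
      simpa using this
    calc eVariationOn (fun t : ℝ => P + t • v) (Set.Icc 0 1)
        ≤ ‖v‖₊ * ENNReal.ofReal 1 := h1.trans (by gcongr)
      _ = ENNReal.ofReal (dist P Q) := by
          rw [ENNReal.ofReal_one, mul_one, ← ENNReal.ofReal_coe_nnreal, coe_nnnorm, hv,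
            dist_eq_norm, norm_sub_rev]
  · have h0 : (0:ℝ) ∈ Set.Icc (0:ℝ) 1 := Set.left_mem_Icc.2 zero_le_one
    have h1 : (1:ℝ) ∈ Set.Icc (0:ℝ) 1 := Set.right_mem_Icc.2 zero_le_one
    have := eVariationOn.edist_le (fun t : ℝ => P + t • v) h0 h1
    simpa [edist_dist, hv] using this

private lemma geodesic_point {X : Type*} [NormedAddCommGroup X] [NormedSpace ℝ X]
    [StrictConvexSpace ℝ X] {γ : ℝ → X} (hγ : ContinuousOn γ (Set.Icc 0 1))
    (hvar : eVariationOn γ (Set.Icc 0 1) = ENNReal.ofReal (dist (γ 0) (γ 1)))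
    {s : ℝ} (hs : s ∈ Set.Icc (0:ℝ) 1) :
    ∃ t ∈ Set.Icc (0:ℝ) 1, γ t = γ 0 + s • (γ 1 - γ 0) := by
  set d := dist (γ 0) (γ 1) with hd
  have hd0 : 0 ≤ d := dist_nonneg
  have hcont : ContinuousOn (fun t => dist (γ 0) (γ t)) (Set.Icc (0:ℝ) 1) :=
    continuous_dist.comp_continuousOn (continuousOn_const.prodMk hγ)
  have hIVT := intermediate_value_Icc (zero_le_one) hcont
  have hmem : s * d ∈ Set.Icc (dist (γ 0) (γ 0)) (dist (γ 0) (γ 1)) := by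
    rw [dist_self]
    exact ⟨mul_nonneg hs.1 hd0, mul_le_of_le_one_left hd0 hs.2⟩
  obtain ⟨t, ht, hdt⟩ := hIVT hmem
  refine ⟨t, ht, ?_⟩
  -- additivity of variation at t
  have key := eVariationOn.Icc_add_Icc γ (s := Set.Icc (0:ℝ) 1) ht.1 ht.2 ht
  rw [Set.Icc_inter_Icc, Set.Icc_inter_Icc, Set.Icc_inter_Icc] at key
  simp only [max_self, min_self, max_eq_right ht.1, min_eq_right ht.2] at key
  have e1 : edist (γ 0) (γ t) ≤ eVariationOn γ (Set.Icc 0 t) :=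
    eVariationOn.edist_le γ (Set.left_mem_Icc.2 ht.1) (Set.right_mem_Icc.2 ht.1)
  have e2 : edist (γ t) (γ 1) ≤ eVariationOn γ (Set.Icc t 1) :=
    eVariationOn.edist_le γ (Set.left_mem_Icc.2 ht.2) (Set.right_mem_Icc.2 ht.2)
  have etot : edist (γ 0) (γ t) + edist (γ t) (γ 1) = edist (γ 0) (γ 1) := by
    apply le_antisymm
    · calc edist (γ 0) (γ t) + edist (γ t) (γ 1)
          ≤ eVariationOn γ (Set.Icc 0 t) + eVariationOn γ (Set.Icc t 1) :=
            add_le_add e1 e2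
        _ = eVariationOn γ (Set.Icc 0 1) := key
        _ = edist (γ 0) (γ 1) := by rw [hvar, edist_dist]
    · exact edist_triangle _ _ _
  have dtot : dist (γ 0) (γ t) + dist (γ t) (γ 1) = d := by
    have := congrArg ENNReal.toReal etot
    rwa [ENNReal.toReal_add (edist_ne_top _ _) (edist_ne_top _ _),
      edist_dist, edist_dist, edist_dist, ENNReal.toReal_ofReal dist_nonneg,
      ENNReal.toReal_ofReal dist_nonneg, ENNReal.toReal_ofReal dist_nonneg] at this
  have hxy : dist (γ 0) (γ t) = s * d := hdt
  have hyz : dist (γ t) (γ 1) = (1 - s) * d := by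
    have := dtot
    rw [hxy] at this
    linarith [this]
  have := eq_lineMap_of_dist_eq_mul_of_dist_eq_mul hxy hyz
  rw [this, AffineMap.lineMap_apply]
  simp only [vsub_eq_sub, vadd_eq_add]
  abel


private lemma aux_shift {V : Type*} [AddCommGroup V] [Module ℝ V] (a a' b : V) (l s₀ : ℝ)
    (hinv : s₀ * (1 - l) = 1) :
    a + s₀ • (b - a) = a' + s₀ • ((b - l • (a - a')) - a') := by
  match_scalars <;> nlinarith [hinv]

private lemma aux_key {V : Type*} [AddCommGroup V] [Module ℝ V] {a a' b b' : V} {t : ℝ}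
    (hcol : a + t • (b - a) = a' + t • (b' - a')) :
    t • (b - b') = (t - 1) • (a - a') := by
  have hD : (a + t • (b - a)) - (a' + t • (b' - a')) = 0 := sub_eq_zero.2 hcol
  have hE : t • (b - b') - (t - 1) • (a - a')
      = (a + t • (b - a)) - (a' + t • (b' - a')) := by
    match_scalars <;> ring
  rw [hD] at hE
  exact sub_eq_zero.1 hE

/-- In the ordered configuration space `F(ℝⁿ,2)` with the ℓ² product metric, the pair of
configurations `(a,a')`, `(b,b')` is joined by a geodesic iff the linear motions do not
collide, i.e. iff `b - b'` is not a negative multiple of `a - a'`. -/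
theorem exists_geodesic_config_iff_not_collide {n : ℕ}
    (a a' b b' : EuclideanSpace ℝ (Fin n)) (ha : a ≠ a') (hb : b ≠ b') :
    (∃ f g : ℝ → EuclideanSpace ℝ (Fin n),
      ContinuousOn f (Set.Icc 0 1) ∧ ContinuousOn g (Set.Icc 0 1) ∧
      f 0 = a ∧ g 0 = a' ∧ f 1 = b ∧ g 1 = b' ∧
      (∀ t ∈ Set.Icc (0 : ℝ) 1, f t ≠ g t) ∧
      eVariationOn
        (fun t : ℝ =>
          (WithLp.equiv 2 (EuclideanSpace ℝ (Fin n) × EuclideanSpace ℝ (Fin n))).symm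
            (f t, g t))
        (Set.Icc 0 1) =
        ENNReal.ofReal
          (dist
            ((WithLp.equiv 2 (EuclideanSpace ℝ (Fin n) × EuclideanSpace ℝ (Fin n))).symm
              (a, a'))
            ((WithLp.equiv 2 (EuclideanSpace ℝ (Fin n) × EuclideanSpace ℝ (Fin n))).symm
              (b, b')))) ↔
    ¬ ∃ l : ℝ, l < 0 ∧ b - b' = l • (a - a') := by
  constructor
  · rintro ⟨f, g, hf, hg, hf0, hg0, hf1, hg1, hne, hvar⟩ ⟨l, hl, hbl⟩
    have h1l : (0:ℝ) < 1 - l := by linarith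
    set s₀ : ℝ := (1 - l)⁻¹ with hs₀def
    have hs₀mem : s₀ ∈ Set.Icc (0:ℝ) 1 :=
      ⟨le_of_lt (inv_pos.2 h1l), inv_le_one_of_one_le₀ (by linarith)⟩
    have hcont : ContinuousOn (fun t : ℝ =>
        (WithLp.equiv 2 (EuclideanSpace ℝ (Fin n) × EuclideanSpace ℝ (Fin n))).symm
          (f t, g t)) (Set.Icc 0 1) :=
      (WithLp.prod_continuous_toLp _ _ _).comp_continuousOn (hf.prodMk hg)
    have hvar' : eVariationOn (fun t : ℝ =>
        (WithLp.equiv 2 (EuclideanSpace ℝ (Fin n) × EuclideanSpace ℝ (Fin n))).symm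
          (f t, g t)) (Set.Icc 0 1) =
        ENNReal.ofReal (dist
          ((WithLp.equiv 2 (EuclideanSpace ℝ (Fin n) × EuclideanSpace ℝ (Fin n))).symm
            (f 0, g 0))
          ((WithLp.equiv 2 (EuclideanSpace ℝ (Fin n) × EuclideanSpace ℝ (Fin n))).symm
            (f 1, g 1))) := by
      rw [hf0, hg0, hf1, hg1]; exact hvar
    obtain ⟨t, ht, hγt⟩ := geodesic_point hcont hvar' hs₀mem
    rw [hf0, hg0, hf1, hg1] at hγt
    have hc := congrArg (WithLp.equiv 2
      (EuclideanSpace ℝ (Fin n) × EuclideanSpace ℝ (Fin n))) hγt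
    simp only [Equiv.apply_symm_apply, WithLp.equiv_apply, WithLp.equiv_symm_apply, WithLp.ofLp_add, WithLp.ofLp_smul,
      WithLp.ofLp_sub, Prod.mk_sub_mk, Prod.smul_mk, Prod.mk_add_mk, Prod.mk.injEq] at hc
    obtain ⟨hft, hgt⟩ := hc
    refine hne t ht ?_
    rw [hft, hgt]
    have hb' : b' = b - l • (a - a') := by rw [← hbl]; abel
    have hinv : s₀ * (1 - l) = 1 := inv_mul_cancel₀ (ne_of_gt h1l)
    rw [hb']
    exact aux_shift a a' b l s₀ hinv
  · intro hnc
    refine ⟨fun t => a + t • (b - a), fun t => a' + t • (b' - a'),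
      (continuous_const.add (continuous_id.smul continuous_const)).continuousOn,
      (continuous_const.add (continuous_id.smul continuous_const)).continuousOn,
      by simp, by simp, by simp, by simp, ?_, ?_⟩
    · intro t ht hcol
      rcases eq_or_lt_of_le ht.1 with h0 | h0
      · rw [← h0] at hcol
        simp only [zero_smul, add_zero] at hcol
        exact ha hcol
      rcases eq_or_lt_of_le ht.2 with h1 | h1
      · rw [h1] at hcol
        simp only [one_smul, add_sub_cancel] at hcol
        exact hb hcol
      have key : t • (b - b') = (t - 1) • (a - a') := aux_key hcol
      have hbb : b - b' = (1 - t⁻¹) • (a - a') := by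
        have h2 := congrArg (fun x => t⁻¹ • x) key
        simp only [smul_smul, inv_mul_cancel₀ (ne_of_gt h0), one_smul] at h2
        rw [h2]
        congr 1
        field_simp
      exact hnc ⟨1 - t⁻¹, by have := (one_lt_inv₀ h0).2 h1; linarith, hbb⟩
    · have hfun : (fun t : ℝ =>
          (WithLp.equiv 2 (EuclideanSpace ℝ (Fin n) × EuclideanSpace ℝ (Fin n))).symm
            (a + t • (b - a), a' + t • (b' - a')))
          = fun t : ℝ =>
            (WithLp.equiv 2 (EuclideanSpace ℝ (Fin n) × EuclideanSpace ℝ (Fin n))).symm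
              (a, a') + t •
              ((WithLp.equiv 2 (EuclideanSpace ℝ (Fin n) × EuclideanSpace ℝ (Fin n))).symm
                (b, b') -
               (WithLp.equiv 2 (EuclideanSpace ℝ (Fin n) × EuclideanSpace ℝ (Fin n))).symm
                (a, a')) := by
        funext t
        simp only [WithLp.equiv_symm_apply]
        rw [← WithLp.toLp_sub, ← WithLp.toLp_smul, ← WithLp.toLp_add]
        congr 1
      rw [show (fun t : ℝ =>
          (WithLp.equiv 2 (EuclideanSpace ℝ (Fin n) × EuclideanSpace ℝ (Fin n))).symm
            ((fun t : ℝ => a + t • (b - a)) t, (fun t : ℝ => a' + t • (b' - a')) t)) = _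
        from hfun]
      exact seg_eVariation _ _
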